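/- Let 𝒱 be an infinite set, let 𝒩 be the set of all symmetric, identity-respecting, positive, triangle-inequality-respecting distance operators on 𝒫(𝒱), and let 𝒪 be any set of distance operators on 𝒫(𝒱) with 𝒩 ⊆ 𝒪. Then there does not exist a normal characterization of 𝒪. -/
import Mathlib


/-- `lt` is a strict total order on `C`. -/
def StrictTotalOrder' {C : Type*} (lt : C → C → Prop) : Prop :=
  (∀ c, ¬ lt c c) ∧ (∀ a b c, lt a b → lt b c → lt a c) ∧
  (∀ a b, a ≠ b → lt a b ∨ lt b a)

/-- The operator induced by a pseudo-distance `⟨C, lt, d⟩`: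
`V |_D W = {w ∈ W : ∃ v ∈ V, ∀ v' ∈ V, ∀ w' ∈ W, d(v,w) ⪯ d(v',w')}`. -/
def inducedOp {𝒱 C : Type*} (lt : C → C → Prop) (d : 𝒱 → 𝒱 → C)
    (A B : Set 𝒱) : Set 𝒱 :=
  {w ∈ B | ∃ v ∈ A, ∀ v' ∈ A, ∀ w' ∈ B, lt (d v w) (d v' w') ∨ d v w = d v' w'}

/-- `op` is a distance operator: it is induced by some pseudo-distance. -/
def IsDistanceOp {𝒱 : Type*} (op : Set 𝒱 → Set 𝒱 → Set 𝒱) : Prop :=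
  ∃ (C : Type*) (lt : C → C → Prop) (d : 𝒱 → 𝒱 → C),
    Nonempty C ∧ StrictTotalOrder' lt ∧ op = inducedOp lt d

/-- `op` is a symmetric, identity-respecting, positive, triangle-inequality-respecting
distance operator (costs are the reals with the usual strict order). -/
def IsNiceDistanceOp {𝒱 : Type*} (op : Set 𝒱 → Set 𝒱 → Set 𝒱) : Prop :=
  ∃ d : 𝒱 → 𝒱 → ℝ,
    (∀ v w, d v w = d w v) ∧
    (∀ v w, d v w = 0 ↔ v = w) ∧
    (∀ v w, 0 ≤ d v w) ∧
    (∀ v w x, d v x ≤ d v w + d w x) ∧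
    op = inducedOp (· < ·) d

/-- There exists a normal characterization of `O`: a pair `⟨n, Φ⟩`, `n` a positive natural
number and `Φ` a relation on `𝒫(𝒱)^(3n)`, such that for every binary operator `op` on `𝒫(𝒱)`:
`op ∈ O` iff for all `V₁,…,Vₙ,W₁,…,Wₙ ⊆ 𝒱`,
`(V₁,…,Vₙ,W₁,…,Wₙ,V₁|W₁,…,Vₙ|Wₙ) ∈ Φ`. -/
def HasNormalCharacterization {𝒱 : Type*} (O : Set (Set 𝒱 → Set 𝒱 → Set 𝒱)) : Prop :=
  ∃ (n : ℕ), 0 < n ∧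
    ∃ Φ : (Fin n → Set 𝒱) → (Fin n → Set 𝒱) → (Fin n → Set 𝒱) → Prop,
      ∀ op : Set 𝒱 → Set 𝒱 → Set 𝒱,
        op ∈ O ↔ ∀ Vs Ws : Fin n → Set 𝒱, Φ Vs Ws (fun i => op (Vs i) (Ws i))

namespace Stmt0Aux

variable {𝒱 : Type*}

lemma mem_inducedOp {C : Type*} {lt : C → C → Prop} {d : 𝒱 → 𝒱 → C} {A B : Set 𝒱} {w : 𝒱} :
    w ∈ inducedOp lt d A B ↔
      w ∈ B ∧ ∃ v ∈ A, ∀ v' ∈ A, ∀ w' ∈ B, lt (d v w) (d v' w') ∨ d v w = d v' w' :=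
  Iff.rfl

lemma mem_inducedOpR {d : 𝒱 → 𝒱 → ℝ} {A B : Set 𝒱} {w : 𝒱} :
    w ∈ inducedOp (· < ·) d A B ↔
      w ∈ B ∧ ∃ v ∈ A, ∀ v' ∈ A, ∀ w' ∈ B, d v w ≤ d v' w' := by
  rw [mem_inducedOp]
  simp only [← le_iff_lt_or_eq]

lemma mem_induced_singletonR {d : 𝒱 → 𝒱 → ℝ} {W : Set 𝒱} {a w : 𝒱} :
    w ∈ inducedOp (· < ·) d {a} W ↔ w ∈ W ∧ ∀ w' ∈ W, d a w ≤ d a w' := by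
  rw [mem_inducedOpR]
  simp [Set.mem_singleton_iff]

open Classical in
noncomputable def gam (x : ℕ → 𝒱) (W : Set 𝒱) : Set 𝒱 :=
  if {m | x m ∈ W}.Infinite then ∅
  else if {m | x m ∈ W}.Nonempty then {x (sInf {m | x m ∈ W})}
  else W

open Classical in
noncomputable def badOp (a : 𝒱) (x : ℕ → 𝒱) (V W : Set 𝒱) : Set 𝒱 :=
  if (V ∩ W).Nonempty then V ∩ W
  else if V = ∅ ∨ W = ∅ then ∅
  else if V = {a} then gam x W
  else if W = {a} then (if {m | x m ∈ V}.Finite then {a} else ∅)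
  else W \ {a}

noncomputable def ccf (M m : ℕ) : ℝ :=
  if m ≤ M then 1.3 - ((10:ℝ) + m)⁻¹ else 1.1 + ((10:ℝ) + m)⁻¹

lemma inv_le_tenth (m : ℕ) : ((10:ℝ) + m)⁻¹ ≤ 0.1 := by
  have h1 : (10:ℝ) ≤ 10 + m := by
    have := Nat.cast_nonneg (α := ℝ) m
    linarith
  calc ((10:ℝ) + m)⁻¹ ≤ (10:ℝ)⁻¹ := by gcongr
    _ = 0.1 := by norm_num

lemma inv_pos' (m : ℕ) : 0 < ((10:ℝ) + m)⁻¹ := by positivity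

lemma ccf_le (M m : ℕ) : ccf M m ≤ 1.3 := by
  unfold ccf
  have h1 := inv_le_tenth m
  have h2 := inv_pos' m
  split_ifs <;> linarith

lemma one_lt_ccf (M m : ℕ) : 1 < ccf M m := by
  unfold ccf
  have h1 := inv_le_tenth m
  have h2 := inv_pos' m
  split_ifs <;> linarith

lemma ccf_head_ge {M m : ℕ} (hm : m ≤ M) : 1.2 ≤ ccf M m := by
  unfold ccf
  rw [if_pos hm]
  have h1 := inv_le_tenth m
  linarith

lemma ccf_tail_lt {M m : ℕ} (hm : M < m) : ccf M m < 1.2 := by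
  unfold ccf
  rw [if_neg (not_le.mpr hm)]
  have h1 : ((10:ℝ) + m)⁻¹ ≤ (11:ℝ)⁻¹ := by
    have h2 : (11:ℝ) ≤ 10 + m := by
      have : (1:ℝ) ≤ m := by exact_mod_cast Nat.one_le_iff_ne_zero.mpr (by omega)
      linarith
    gcongr
  have : (11:ℝ)⁻¹ < 0.1 := by norm_num
  linarith

lemma ccf_head_lt_head {M j j' : ℕ} (hjj : j < j') (hj' : j' ≤ M) : ccf M j < ccf M j' := by
  unfold ccf
  rw [if_pos (le_trans hjj.le hj'), if_pos hj']
  have : ((10:ℝ) + j')⁻¹ < ((10:ℝ) + j)⁻¹ := by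
    gcongr
  linarith

lemma ccf_head_le_head {M j j' : ℕ} (hjj : j ≤ j') (hj' : j' ≤ M) : ccf M j ≤ ccf M j' := by
  rcases eq_or_lt_of_le hjj with rfl | h
  · exact le_refl _
  · exact (ccf_head_lt_head h hj').le

lemma ccf_tail_lt_tail {M j m : ℕ} (hj : M < j) (hjm : j < m) : ccf M m < ccf M j := by
  unfold ccf
  rw [if_neg (not_le.mpr hj), if_neg (not_le.mpr (hj.trans hjm))]
  have : ((10:ℝ) + m)⁻¹ < ((10:ℝ) + j)⁻¹ := by
    gcongr
  linarith

open Classical in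
noncomputable def cf (x : ℕ → 𝒱) (M : ℕ) (v : 𝒱) : ℝ :=
  if v ∈ Set.range x then ccf M (Function.invFun x v) else 1.8

open Classical in
noncomputable def df (a : 𝒱) (x : ℕ → 𝒱) (M : ℕ) (u v : 𝒱) : ℝ :=
  if u = v then 0 else if u = a then cf x M v else if v = a then cf x M u else 1

lemma cf_x {x : ℕ → 𝒱} (hinj : Function.Injective x) (M m : ℕ) :
    cf x M (x m) = ccf M m := by
  unfold cf
  rw [if_pos ⟨m, rfl⟩, Function.leftInverse_invFun hinj m]

lemma cf_not {x : ℕ → 𝒱} {M : ℕ} {v : 𝒱} (h : v ∉ Set.range x) : cf x M v = 1.8 := by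
  unfold cf; rw [if_neg h]

lemma one_lt_cf (x : ℕ → 𝒱) (M : ℕ) (v : 𝒱) : 1 < cf x M v := by
  unfold cf; split_ifs
  · exact one_lt_ccf _ _
  · norm_num

lemma cf_le (x : ℕ → 𝒱) (M : ℕ) (v : 𝒱) : cf x M v ≤ 1.8 := by
  unfold cf; split_ifs
  · linarith [ccf_le M (Function.invFun x v)]
  · exact le_refl _

lemma df_self (a : 𝒱) (x : ℕ → 𝒱) (M : ℕ) (v : 𝒱) : df a x M v v = 0 := by
  unfold df; rw [if_pos rfl]

lemma one_le_df {a u v : 𝒱} {x : ℕ → 𝒱} {M : ℕ} (h : u ≠ v) : 1 ≤ df a x M u v := by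
  unfold df
  rw [if_neg h]
  split_ifs
  · exact (one_lt_cf x M v).le
  · exact (one_lt_cf x M u).le
  · exact le_refl _

lemma df_nonneg (a : 𝒱) (x : ℕ → 𝒱) (M : ℕ) (u v : 𝒱) : 0 ≤ df a x M u v := by
  by_cases h : u = v
  · subst h; rw [df_self]
  · linarith [one_le_df (a := a) (x := x) (M := M) h]

lemma df_le_two (a : 𝒱) (x : ℕ → 𝒱) (M : ℕ) (u v : 𝒱) : df a x M u v ≤ 2 := by
  unfold df
  have h1 := cf_le x M u
  have h2 := cf_le x M v
  split_ifs <;> linarith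

lemma df_a {a w : 𝒱} {x : ℕ → 𝒱} {M : ℕ} (h : w ≠ a) : df a x M a w = cf x M w := by
  unfold df
  rw [if_neg (fun h' => h h'.symm), if_pos rfl]

lemma df_a' {a v : 𝒱} {x : ℕ → 𝒱} {M : ℕ} (h : v ≠ a) : df a x M v a = cf x M v := by
  unfold df
  rw [if_neg h, if_neg h, if_pos rfl]

lemma df_off {a u v : 𝒱} {x : ℕ → 𝒱} {M : ℕ} (h : u ≠ v) (hu : u ≠ a) (hv : v ≠ a) :
    df a x M u v = 1 := by
  unfold df
  rw [if_neg h, if_neg hu, if_neg hv]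

lemma df_eq_zero_iff {a u v : 𝒱} {x : ℕ → 𝒱} {M : ℕ} : df a x M u v = 0 ↔ u = v := by
  constructor
  · intro h
    by_contra hne
    have := one_le_df (a := a) (x := x) (M := M) hne
    linarith
  · rintro rfl; exact df_self _ _ _ _

lemma isNice_df (a : 𝒱) (x : ℕ → 𝒱) (M : ℕ) :
    IsNiceDistanceOp (inducedOp (· < ·) (df a x M)) := by
  refine ⟨df a x M, ?_, ?_, df_nonneg a x M, ?_, rfl⟩
  · intro u v
    by_cases h : u = v
    · subst h; rfl
    · by_cases hu : u = a
      · subst hu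
        rw [df_a (fun h' => h h'.symm), df_a' (fun h' => h h'.symm)]
      · by_cases hv : v = a
        · subst hv
          rw [df_a' hu, df_a hu]
        · rw [df_off h hu hv, df_off (fun h' => h h'.symm) hv hu]
  · intro u v; exact df_eq_zero_iff
  · intro u w v
    by_cases huv : u = v
    · subst huv
      rw [df_self]
      exact add_nonneg (df_nonneg _ _ _ _ _) (df_nonneg _ _ _ _ _)
    · by_cases hwu : w = u
      · subst hwu; rw [df_self]; linarith
      · by_cases hwv : w = v
        · subst hwv; rw [df_self]; linarith
        · have h1 := one_le_df (a := a) (x := x) (M := M) (Ne.symm hwu)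
          have h2 := one_le_df (a := a) (x := x) (M := M) hwv
          have h3 := df_le_two a x M u v
          linarith

lemma nat_exists_gt {S : Set ℕ} (h : S.Infinite) (N : ℕ) : ∃ m ∈ S, N < m := by
  by_contra hc
  push_neg at hc
  exact h ((Set.finite_Iic N).subset fun m hm => Set.mem_Iic.mpr (hc m hm))

lemma no_min {x : ℕ → 𝒱} (hinj : Function.Injective x) (M : ℕ) {S : Set 𝒱}
    (hInf : {m | x m ∈ S}.Infinite) (w : 𝒱) :
    ∃ w' ∈ S, cf x M w' < cf x M w := by
  classical
  by_cases hw : w ∈ Set.range x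
  · obtain ⟨j, rfl⟩ := hw
    obtain ⟨m, hmS, hm⟩ := nat_exists_gt hInf (max M j)
    refine ⟨x m, hmS, ?_⟩
    rw [cf_x hinj, cf_x hinj]
    have hM : M < m := lt_of_le_of_lt (le_max_left _ _) hm
    have hj : j < m := lt_of_le_of_lt (le_max_right _ _) hm
    by_cases hjM : j ≤ M
    · exact lt_of_lt_of_le (ccf_tail_lt hM) (ccf_head_ge hjM)
    · exact ccf_tail_lt_tail (not_le.mp hjM) hj
  · obtain ⟨m, hmS, hm⟩ := nat_exists_gt hInf M
    refine ⟨x m, hmS, ?_⟩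
    rw [cf_x hinj, cf_not hw]
    have := ccf_tail_lt hm
    linarith

lemma exists_ne_of_ne_singleton {V : Set 𝒱} {a : 𝒱} (hne : V.Nonempty) (h : V ≠ {a}) :
    ∃ v ∈ V, v ≠ a := by
  by_contra hc
  push_neg at hc
  exact h (Set.eq_singleton_iff_nonempty_unique_mem.mpr ⟨hne, hc⟩)

lemma induced_eq {x : ℕ → 𝒱} {a : 𝒱} (hinj : Function.Injective x)
    (ha : a ∉ Set.range x) (M : ℕ) (V W : Set 𝒱)
    (hb : {m | x m ∈ W}.Finite → ∀ m, x m ∈ W → m ≤ M) :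
    inducedOp (· < ·) (df a x M) V W = badOp a x V W := by
  classical
  by_cases h1 : (V ∩ W).Nonempty
  · unfold badOp
    rw [if_pos h1]
    ext w
    rw [mem_inducedOpR]
    constructor
    · rintro ⟨hwW, v, hvV, hmin⟩
      obtain ⟨u, huV, huW⟩ := h1
      have h0 : df a x M v w ≤ 0 := by
        have := hmin u huV u huW
        rwa [df_self] at this
      have hvw : v = w := df_eq_zero_iff.mp (le_antisymm h0 (df_nonneg _ _ _ _ _))
      exact ⟨hvw ▸ hvV, hwW⟩
    · rintro ⟨hwV, hwW⟩
      exact ⟨hwW, w, hwV, fun v' _ w' _ => by rw [df_self]; exact df_nonneg _ _ _ _ _⟩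
  · have hdis : ∀ u, u ∈ V → u ∉ W := fun u hu hw => h1 ⟨u, hu, hw⟩
    by_cases h2 : V = ∅ ∨ W = ∅
    · unfold badOp
      rw [if_neg h1, if_pos h2]
      rcases h2 with h | h <;> subst h <;> ext w <;> rw [mem_inducedOpR] <;> simp
    · push_neg at h2
      obtain ⟨hVne, hWne⟩ := h2
      have hor : ¬ (V = ∅ ∨ W = ∅) := not_or.mpr ⟨hVne.ne_empty, hWne.ne_empty⟩
      by_cases h3 : V = {a}
      · subst h3
        have haW : a ∉ W := hdis a rfl
        unfold badOp
        rw [if_neg h1, if_neg hor, if_pos rfl]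
        have hredw : ∀ w, w ∈ inducedOp (· < ·) (df a x M) {a} W ↔
            w ∈ W ∧ ∀ w' ∈ W, cf x M w ≤ cf x M w' := by
          intro w
          rw [mem_induced_singletonR]
          constructor
          · rintro ⟨hwW, hmin⟩
            refine ⟨hwW, fun w' hw' => ?_⟩
            have h := hmin w' hw'
            rwa [df_a (show w ≠ a from fun h' => haW (h' ▸ hwW)),
              df_a (show w' ≠ a from fun h' => haW (h' ▸ hw'))] at h
          · rintro ⟨hwW, hmin⟩
            refine ⟨hwW, fun w' hw' => ?_⟩
            rw [df_a (show w ≠ a from fun h' => haW (h' ▸ hwW)),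
              df_a (show w' ≠ a from fun h' => haW (h' ▸ hw'))]
            exact hmin w' hw'
        by_cases hInf : {m | x m ∈ W}.Infinite
        · unfold gam
          rw [if_pos hInf]
          ext w
          rw [hredw]
          simp only [Set.mem_empty_iff_false, iff_false]
          rintro ⟨hwW, hmin⟩
          obtain ⟨w', hw'W, hlt⟩ := no_min hinj M hInf w
          exact absurd (hmin w' hw'W) (not_le.mpr hlt)
        · have hFin : {m | x m ∈ W}.Finite := Set.not_infinite.mp hInf
          by_cases hNe : {m | x m ∈ W}.Nonempty
          · unfold gam
            rw [if_neg hInf, if_pos hNe]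
            have hj₀mem : x (sInf {m | x m ∈ W}) ∈ W := Nat.sInf_mem hNe
            have hbd := hb hFin
            ext w
            rw [hredw]
            simp only [Set.mem_singleton_iff]
            constructor
            · rintro ⟨hwW, hmin⟩
              have hle := hmin (x (sInf {m | x m ∈ W})) hj₀mem
              rw [cf_x hinj] at hle
              by_cases hw : w ∈ Set.range x
              · obtain ⟨j, rfl⟩ := hw
                rw [cf_x hinj] at hle
                have hjM : j ≤ M := hbd j hwW
                have hj₀le : sInf {m | x m ∈ W} ≤ j := Nat.sInf_le hwW
                rcases eq_or_lt_of_le hj₀le with h | h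
                · rw [h]
                · exact absurd hle (not_le.mpr (ccf_head_lt_head h hjM))
              · rw [cf_not hw] at hle
                have := ccf_le M (sInf {m | x m ∈ W})
                linarith
            · rintro rfl
              refine ⟨hj₀mem, fun w' hw' => ?_⟩
              rw [cf_x hinj]
              by_cases hw' : w' ∈ Set.range x
              · obtain ⟨j, rfl⟩ := hw'
                rw [cf_x hinj]
                exact ccf_head_le_head (Nat.sInf_le hw') (hbd j hw')
              · rw [cf_not hw']
                linarith [ccf_le M (sInf {m | x m ∈ W})]
          · unfold gam
            rw [if_neg hInf, if_neg hNe]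
            have hcw : ∀ u ∈ W, cf x M u = 1.8 := by
              intro u hu
              apply cf_not
              rintro ⟨m, rfl⟩
              exact hNe ⟨m, hu⟩
            ext w
            rw [hredw]
            constructor
            · rintro ⟨hwW, _⟩; exact hwW
            · intro hwW
              refine ⟨hwW, fun w' hw' => ?_⟩
              rw [hcw w hwW, hcw w' hw']
      · by_cases h4 : W = {a}
        · subst h4
          have haV : a ∉ V := fun hv => hdis a hv rfl
          unfold badOp
          rw [if_neg h1, if_neg hor, if_neg h3, if_pos rfl]
          have hred : ∀ w, w ∈ inducedOp (· < ·) (df a x M) V {a} ↔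
              w = a ∧ ∃ v ∈ V, ∀ v' ∈ V, cf x M v ≤ cf x M v' := by
            intro w
            rw [mem_inducedOpR]
            constructor
            · rintro ⟨hwa, v, hv, hmin⟩
              rw [Set.mem_singleton_iff] at hwa
              refine ⟨hwa, v, hv, fun v' hv' => ?_⟩
              have h := hmin v' hv' a rfl
              rw [hwa] at h
              rwa [df_a' (show v ≠ a from fun h' => haV (h' ▸ hv)),
                df_a' (show v' ≠ a from fun h' => haV (h' ▸ hv'))] at h
            · rintro ⟨hwa, v, hv, hmin⟩
              refine ⟨Set.mem_singleton_iff.mpr hwa, v, hv, fun v' hv' w' hw' => ?_⟩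
              rw [Set.mem_singleton_iff] at hw'
              rw [hwa, hw']
              rw [df_a' (show v ≠ a from fun h' => haV (h' ▸ hv)),
                df_a' (show v' ≠ a from fun h' => haV (h' ▸ hv'))]
              exact hmin v' hv'
          by_cases hFinV : {m | x m ∈ V}.Finite
          · rw [if_pos hFinV]
            have hex : ∃ v ∈ V, ∀ v' ∈ V, cf x M v ≤ cf x M v' := by
              by_cases hA : {m | x m ∈ V}.Nonempty
              · obtain ⟨m₀, hm₀, hmin⟩ := Set.exists_min_image {m | x m ∈ V} (ccf M) hFinV hA
                refine ⟨x m₀, hm₀, fun v' hv' => ?_⟩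
                rw [cf_x hinj]
                by_cases hv'r : v' ∈ Set.range x
                · obtain ⟨j, rfl⟩ := hv'r
                  rw [cf_x hinj]
                  exact hmin j hv'
                · rw [cf_not hv'r]; linarith [ccf_le M m₀]
              · obtain ⟨v, hv⟩ := hVne
                refine ⟨v, hv, fun v' hv' => ?_⟩
                have e : ∀ u ∈ V, cf x M u = 1.8 := by
                  intro u hu
                  apply cf_not
                  rintro ⟨m, rfl⟩
                  exact hA ⟨m, hu⟩
                rw [e v hv, e v' hv']
            ext w
            rw [hred]
            simp only [Set.mem_singleton_iff]
            constructor
            · rintro ⟨hwa, _⟩; exact hwa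
            · intro h; exact ⟨h, hex⟩
          · rw [if_neg hFinV]
            have hInfV : {m | x m ∈ V}.Infinite := hFinV
            ext w
            rw [hred]
            simp only [Set.mem_empty_iff_false, iff_false]
            rintro ⟨hwa, v, hv, hmin⟩
            obtain ⟨v', hv'V, hlt⟩ := no_min hinj M hInfV v
            exact absurd (hmin v' hv'V) (not_le.mpr hlt)
        · unfold badOp
          rw [if_neg h1, if_neg hor, if_neg h3, if_neg h4]
          obtain ⟨v₁, hv₁, hv₁a⟩ := exists_ne_of_ne_singleton hVne h3
          obtain ⟨w₁, hw₁, hw₁a⟩ := exists_ne_of_ne_singleton hWne h4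
          ext w
          rw [mem_inducedOpR]
          simp only [Set.mem_diff, Set.mem_singleton_iff]
          constructor
          · rintro ⟨hwW, v, hv, hmin⟩
            refine ⟨hwW, fun hwa => ?_⟩
            have h := hmin v₁ hv₁ w₁ hw₁
            rw [df_off (show v₁ ≠ w₁ from fun h' => hdis v₁ hv₁ (h' ▸ hw₁)) hv₁a hw₁a] at h
            have haW : a ∈ W := hwa ▸ hwW
            have hva : v ≠ a := fun h' => hdis v hv (h'.symm ▸ haW)
            rw [hwa, df_a' hva] at h
            linarith [one_lt_cf x M v]
          · rintro ⟨hwW, hwa⟩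
            refine ⟨hwW, v₁, hv₁, fun v' hv' w' hw' => ?_⟩
            rw [df_off (show v₁ ≠ w from fun h' => hdis v₁ hv₁ (h' ▸ hwW)) hv₁a hwa]
            exact one_le_df (show v' ≠ w' from fun h' => hdis v' hv' (h' ▸ hw'))

lemma gam_pair {x : ℕ → 𝒱} (hinj : Function.Injective x) (m : ℕ) :
    gam x {x m, x (m+1)} = {x m} := by
  classical
  have hidx : {j | x j ∈ ({x m, x (m+1)} : Set 𝒱)} = {m, m+1} := by
    ext j
    simp [Set.mem_insert_iff, hinj.eq_iff]
  unfold gam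
  rw [hidx]
  have hfin : ({m, m+1} : Set ℕ).Finite := (Set.finite_singleton (m+1)).insert m
  rw [if_neg hfin.not_infinite, if_pos ⟨m, Set.mem_insert m _⟩]
  have hinf : sInf ({m, m+1} : Set ℕ) = m := by
    rcases Nat.sInf_mem (⟨m, Set.mem_insert m _⟩ : ({m, m+1} : Set ℕ).Nonempty) with h | h
    · exact h
    · have := Nat.sInf_le (Set.mem_insert m ({m+1} : Set ℕ))
      rw [Set.mem_singleton_iff] at h
      omega
  rw [hinf]

lemma badOp_pair {x : ℕ → 𝒱} {a : 𝒱} (hinj : Function.Injective x)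
    (ha : a ∉ Set.range x) (m : ℕ) :
    badOp a x {a} {x m, x (m+1)} = {x m} := by
  classical
  unfold badOp
  rw [if_neg, if_neg, if_pos rfl, gam_pair hinj]
  · rintro (h | h)
    · exact Set.singleton_ne_empty a h
    · exact (Set.insert_nonempty _ _).ne_empty h
  · rintro ⟨u, hu1, hu2⟩
    rw [Set.mem_singleton_iff] at hu1
    subst hu1
    rcases hu2 with h | h
    · exact ha ⟨m, h.symm⟩
    · rw [Set.mem_singleton_iff] at h
      exact ha ⟨m+1, h.symm⟩

lemma badOp_range {x : ℕ → 𝒱} {a : 𝒱} (hinj : Function.Injective x)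
    (ha : a ∉ Set.range x) :
    badOp a x {a} (Set.range x) = ∅ := by
  classical
  unfold badOp
  rw [if_neg, if_neg, if_pos rfl]
  · unfold gam
    rw [if_pos]
    have : {m | x m ∈ Set.range x} = Set.univ := by
      ext j; simp
    rw [this]
    exact Set.infinite_univ
  · rintro (h | h)
    · exact Set.singleton_ne_empty a h
    · exact (Set.range_nonempty x).ne_empty h
  · rintro ⟨u, hu1, hu2⟩
    rw [Set.mem_singleton_iff] at hu1
    subst hu1
    exact ha hu2

theorem badOp_not_dist {x : ℕ → 𝒱} {a : 𝒱} (hinj : Function.Injective x)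
    (ha : a ∉ Set.range x) : ¬ IsDistanceOp (badOp a x) := by
  rintro ⟨C, lt, d, -, ⟨hirr, htrans, htot⟩, hop⟩
  have step : ∀ m, lt (d a (x m)) (d a (x (m+1))) := by
    intro m
    by_contra hlt
    have hmem : x (m+1) ∈ inducedOp lt d {a} {x m, x (m+1)} := by
      rw [mem_inducedOp]
      refine ⟨Set.mem_insert_of_mem _ rfl, a, rfl, fun v' hv' w' hw' => ?_⟩
      rw [Set.mem_singleton_iff] at hv'
      rw [hv']
      rcases hw' with h | h
      · subst h
        by_cases heq : d a (x (m+1)) = d a (x m)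
        · exact Or.inr heq
        · rcases htot _ _ heq with h' | h'
          · exact Or.inl h'
          · exact absurd h' hlt
      · rw [Set.mem_singleton_iff] at h
        subst h
        exact Or.inr rfl
    rw [← hop, badOp_pair hinj ha, Set.mem_singleton_iff] at hmem
    exact (by omega : m + 1 ≠ m) (hinj hmem)
  have chain : ∀ j, lt (d a (x 0)) (d a (x (j+1))) := by
    intro j
    induction j with
    | zero => exact step 0
    | succ k ih => exact htrans _ _ _ ih (step (k+1))
  have hmem : x 0 ∈ inducedOp lt d {a} (Set.range x) := by
    rw [mem_inducedOp]
    refine ⟨⟨0, rfl⟩, a, rfl, fun v' hv' w' hw' => ?_⟩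
    rw [Set.mem_singleton_iff] at hv'
    rw [hv']
    obtain ⟨j, rfl⟩ := hw'
    cases j with
    | zero => exact Or.inr rfl
    | succ k => exact Or.inl (chain k)
  rw [← hop, badOp_range hinj ha] at hmem
  exact hmem


end Stmt0Aux

theorem stmt0 {𝒱 : Type*} [Infinite 𝒱]
    (O : Set (Set 𝒱 → Set 𝒱 → Set 𝒱))
    (hO : ∀ op ∈ O, IsDistanceOp op)
    (hN : ∀ op, IsNiceDistanceOp op → op ∈ O) :
    ¬ HasNormalCharacterization O := by
  classical
  rintro ⟨n, -, Φ, hΦ⟩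
  obtain ⟨a, x, hinj, ha⟩ :
      ∃ (a : 𝒱) (x : ℕ → 𝒱), Function.Injective x ∧ a ∉ Set.range x := by
    refine ⟨Infinite.natEmbedding 𝒱 0, fun m => Infinite.natEmbedding 𝒱 (m+1),
      fun p q h => ?_, ?_⟩
    · have := (Infinite.natEmbedding 𝒱).injective h
      omega
    · rintro ⟨m, hm⟩
      have := (Infinite.natEmbedding 𝒱).injective hm
      omega
  have hmem : Stmt0Aux.badOp a x ∈ O := by
    refine (hΦ _).mpr fun Vs Ws => ?_
    have hM : ∀ i : Fin n, ∃ Mi : ℕ,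
        {m | x m ∈ Ws i}.Finite → ∀ m, x m ∈ Ws i → m ≤ Mi := by
      intro i
      by_cases h : {m | x m ∈ Ws i}.Finite
      · obtain ⟨b, hb⟩ := h.bddAbove
        exact ⟨b, fun _ m hm => hb hm⟩
      · exact ⟨0, fun hf => absurd hf h⟩
    choose Mi hMi using hM
    have key : ∀ i, inducedOp (· < ·) (Stmt0Aux.df a x (Finset.univ.sup Mi)) (Vs i) (Ws i)
        = Stmt0Aux.badOp a x (Vs i) (Ws i) := fun i =>
      Stmt0Aux.induced_eq hinj ha _ _ _
        (fun hf m hm => le_trans (hMi i hf m hm) (Finset.le_sup (Finset.mem_univ i)))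
    have hnice := hN _ (Stmt0Aux.isNice_df a x (Finset.univ.sup Mi))
    have hphi := (hΦ _).mp hnice Vs Ws
    have heq : (fun i => inducedOp (· < ·) (Stmt0Aux.df a x (Finset.univ.sup Mi)) (Vs i) (Ws i))
        = fun i => Stmt0Aux.badOp a x (Vs i) (Ws i) := funext key
    rwa [heq] at hphi
  exact Stmt0Aux.badOp_not_dist hinj ha (hO _ hmem)
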